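/- (Efficient odd-order formula) Let N ≥ 1 and k ≥ 0 be natural numbers and let c ∈ ℝ^N be a nonzero vector with nonnegative coefficients sorted in ascending order 0 ≤ c_1 ≤ … ≤ c_N. Then the Generalised Differential Sparsity of order 2k+1 satisfies S_{2k+1}(c) = (1/(N · ‖c‖_{2k+1}^{2k+1})) · Σ_{ω=0}^{k} (−1)^ω · C(2k+1, ω) · Σ_{i=1}^N ( c_i^{2k+1−ω} · f_ω(i) − c_i^ω · f_{2k+1−ω}(i) ), where f_ω(i) = Σ_{j=1}^i c_j^ω (with the convention c_j^0 = 1 so that f_0(i) = i), ‖c‖_{2k+1}^{2k+1} = Σ_{i=1}^N c_i^{2k+1}, and C(n, r) denotes the binomial coefficient. -/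

import Mathlib

open Finset

lemma half_sum {M : Type*} [AddCommMonoid M] (g : ℕ → M) (k : ℕ) :
    ∑ ω ∈ Finset.range (2*k+2), g ω
      = ∑ ω ∈ Finset.range (k+1), (g ω + g (2*k+1-ω)) := by
  rw [Finset.sum_add_distrib]
  have h1 : ∑ ω ∈ Finset.range (2*k+2), g ω
      = ∑ ω ∈ Finset.range (k+1), g ω + ∑ ω ∈ Finset.Ico (k+1) (2*k+2), g ω := by
    rw [Finset.range_eq_Ico,
      ← Finset.sum_Ico_consecutive g (Nat.zero_le (k+1)) (by omega : k+1 ≤ 2*k+2), Finset.range_eq_Ico]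
  rw [h1]
  congr 1
  rw [Finset.sum_Ico_eq_sum_range]
  have h2 : 2*k+2 - (k+1) = k+1 := by omega
  rw [h2, ← Finset.sum_range_reflect]
  apply Finset.sum_congr rfl
  intro i hi
  simp only [Finset.mem_range] at hi
  congr 1
  omega

lemma odd_sub_pow (a b : ℝ) (k : ℕ) :
    (b - a)^(2*k+1) = ∑ ω ∈ Finset.range (k+1),
      (-1:ℝ)^ω * (Nat.choose (2*k+1) ω) * (b^(2*k+1-ω)*a^ω - b^ω*a^(2*k+1-ω)) := by
  rw [sub_pow]
  have h : 2*k+1+1 = 2*k+2 := rfl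
  rw [h, half_sum]
  apply Finset.sum_congr rfl
  intro ω hω
  simp only [Finset.mem_range] at hω
  have hle : ω ≤ 2*k+1 := by omega
  have e1 : 2*k+1 - (2*k+1-ω) = ω := by omega
  have e2 : Nat.choose (2*k+1) (2*k+1-ω) = Nat.choose (2*k+1) ω := Nat.choose_symm hle
  rw [e1, e2]
  have p1 : (-1:ℝ)^(ω + (2*k+1)) = -(-1:ℝ)^ω := by
    rw [pow_add]; simp [pow_succ, pow_mul]
  have p2 : (-1:ℝ)^(2*k+1-ω + (2*k+1)) = (-1:ℝ)^ω := by
    have : 2*k+1-ω + (2*k+1) = ω + 2*(2*k+1-ω) := by omega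
    rw [this, pow_add, pow_mul]; simp
  rw [p1, p2]
  ring

/-- Generalised Differential Sparsity of order `p` (sorted coefficients). -/
noncomputable def gds (N : ℕ) (p : ℝ) (c : Fin N → ℝ) : ℝ :=
  (1 / (N * ∑ i, c i ^ p)) *
    ∑ i : Fin N, ∑ j : Fin N, if i < j then (c j - c i) ^ p else 0

/-- Partial power sum `f_ω(i) = Σ_{j ≤ i} c_j^ω` (with `c_j^0 = 1`). -/
noncomputable def partialPowerSum (N : ℕ) (c : Fin N → ℝ) (ω : ℕ) (i : Fin N) : ℝ :=
  ∑ j : Fin N, if j ≤ i then c j ^ ω else 0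

theorem gds_odd_formula (N : ℕ) (hN : 1 ≤ N) (k : ℕ)
    (c : Fin N → ℝ) (hc0 : ∀ i, 0 ≤ c i) (hmono : Monotone c) (hne : c ≠ 0) :
    gds N ((2 * k + 1 : ℕ) : ℝ) c =
      (1 / (N * ∑ i, c i ^ (2 * k + 1))) *
        ∑ ω ∈ Finset.range (k + 1), (-1 : ℝ) ^ ω * (Nat.choose (2 * k + 1) ω) *
          ∑ i : Fin N,
            (c i ^ (2 * k + 1 - ω) * partialPowerSum N c ω i -
              c i ^ ω * partialPowerSum N c (2 * k + 1 - ω) i) := by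
  rw [gds]
  simp only [Real.rpow_natCast]
  congr 1
  -- Step A: rewrite the inner sums of the RHS as double sums over i < j
  have stepA : ∀ ω : ℕ,
      ∑ i : Fin N, (c i ^ (2*k+1-ω) * partialPowerSum N c ω i -
          c i ^ ω * partialPowerSum N c (2*k+1-ω) i)
        = ∑ i : Fin N, ∑ j : Fin N,
            if i < j then c j ^ (2*k+1-ω) * c i ^ ω - c j ^ ω * c i ^ (2*k+1-ω) else 0 := by
    intro ω
    have l1 : ∀ i : Fin N,
        c i ^ (2*k+1-ω) * partialPowerSum N c ω i -
            c i ^ ω * partialPowerSum N c (2*k+1-ω) i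
          = ∑ j : Fin N,
              if j < i then c i ^ (2*k+1-ω) * c j ^ ω - c i ^ ω * c j ^ (2*k+1-ω) else 0 := by
      intro i
      simp only [partialPowerSum, Finset.mul_sum, ← Finset.sum_sub_distrib, mul_ite, mul_zero]
      apply Finset.sum_congr rfl
      intro j _
      rcases lt_trichotomy j i with h | h | h
      · rw [if_pos h.le, if_pos h.le, if_pos h]
      · subst h
        rw [if_pos le_rfl, if_pos le_rfl, if_neg (lt_irrefl j)]
        ring
      · rw [if_neg (not_le.mpr h), if_neg (not_le.mpr h), if_neg (asymm h), sub_zero]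
    rw [Finset.sum_congr rfl fun i _ => l1 i, Finset.sum_comm]
  have stepB : ∑ ω ∈ Finset.range (k + 1), (-1 : ℝ) ^ ω * (Nat.choose (2 * k + 1) ω) *
          ∑ i : Fin N,
            (c i ^ (2 * k + 1 - ω) * partialPowerSum N c ω i -
              c i ^ ω * partialPowerSum N c (2 * k + 1 - ω) i)
      = ∑ ω ∈ Finset.range (k + 1), ∑ i : Fin N, ∑ j : Fin N,
          if i < j then (-1 : ℝ) ^ ω * (Nat.choose (2 * k + 1) ω) *
            (c j ^ (2*k+1-ω) * c i ^ ω - c j ^ ω * c i ^ (2*k+1-ω)) else 0 := by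
    apply Finset.sum_congr rfl
    intro ω _
    rw [stepA ω, Finset.mul_sum]
    apply Finset.sum_congr rfl
    intro i _
    rw [Finset.mul_sum]
    apply Finset.sum_congr rfl
    intro j _
    rw [mul_ite, mul_zero]
  rw [stepB]
  conv_rhs => rw [Finset.sum_comm]
  apply Finset.sum_congr rfl
  intro i _
  conv_rhs => rw [Finset.sum_comm]
  apply Finset.sum_congr rfl
  intro j _
  by_cases h : i < j
  · simp only [if_pos h]
    rw [odd_sub_pow (c i) (c j) k]
  · simp only [if_neg h, Finset.sum_const_zero]
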